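/- Let n ≥ 1, N ≥ 1, and let distinct integers y_1 < ... < y_n be given with 1 ≤ y_i ≤ N + i (so that the matrix below is invertible with nonzero determinant). Define M[i][j] = C(N, y_j - i) for 1 ≤ i,j ≤ n. Then det M = (Π_{1≤i<j≤n}(y_j - y_i) · Π_{i=1}^{n}(N+i-1)!) / (Π_{i=1}^{n}(y_i - 1)! · Π_{i=1}^{n}(N + n - y_i)!). -/

import Mathlib

/-- Binomial coefficient `C(m, k)` for natural `m` and integer `k`, zero for `k < 0`. -/
def zchoose (m : ℕ) (k : ℤ) : ℕ := if 0 ≤ k then m.choose k.toNat else 0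

open Finset

lemma lgv_prod1 (i : ℕ) (t : ℤ) (h : (i : ℤ) ≤ t - 1) :
    ∏ k ∈ Finset.range i, ((t : ℚ) - (k + 1)) = ((t - 1).toNat.descFactorial i : ℚ) := by
  induction i with
  | zero => simp
  | succ i ih =>
    rw [Finset.prod_range_succ, ih (by omega), Nat.descFactorial_succ]
    have h1 : ((t - 1).toNat - i : ℕ) = (t - 1 - i).toNat := by omega
    have h2 : (((t - 1 - i).toNat : ℤ) : ℚ) = (t : ℚ) - 1 - i := by
      rw [Int.toNat_of_nonneg (by omega)]; push_cast; ring
    push_cast [h1] at h2 ⊢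
    rw [h2]; ring

lemma lgv_prod_asc (c : ℤ) (m : ℕ) (hc : 1 ≤ c) :
    ∏ j ∈ Finset.range m, ((c : ℚ) + j) = ((c + m - 1).toNat.descFactorial m : ℚ) := by
  induction m with
  | zero => simp
  | succ m ih =>
    have h1 : (c + ((m + 1 : ℕ) : ℤ) - 1).toNat = ((c + m - 1).toNat) + 1 := by push_cast; omega
    rw [Finset.prod_range_succ, ih, h1, Nat.succ_descFactorial_succ]
    have h2 : ((((c + m - 1).toNat + 1 : ℕ) : ℤ) : ℚ) = (c : ℚ) + m := by
      push_cast [Int.toNat_of_nonneg (by omega : (0:ℤ) ≤ c + m - 1)]; ring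
    push_cast at h2 ⊢
    rw [h2]; ring

lemma lgv_prod2 (N n i : ℕ) (t : ℤ) (hin : i < n) (ht : t ≤ (N : ℤ) + i + 1) :
    ∏ k ∈ Finset.Ico (i + 1) n, ((N : ℚ) + k + 1 - t)
      = (((N : ℤ) + n - t).toNat.descFactorial (n - 1 - i) : ℚ) := by
  rw [Finset.prod_Ico_eq_prod_range]
  have := lgv_prod_asc ((N : ℤ) + i + 2 - t) (n - (i + 1)) (by omega)
  have harg : ((N : ℤ) + i + 2 - t) + (n - (i + 1) : ℕ) - 1 = (N : ℤ) + n - t := by omega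
  have hm : n - (i + 1) = n - 1 - i := by omega
  rw [harg, hm] at this
  rw [← this, ← hm]
  apply Finset.prod_congr rfl
  intro j _
  push_cast
  ring

lemma lgv_entry (n N : ℕ) (i : ℕ) (hi : i < n) (t : ℤ) (h1 : 1 ≤ t) (h2 : t ≤ (N : ℤ) + n) :
    (zchoose N (t - (i + 1)) : ℚ) * ((t - 1).toNat.factorial : ℚ)
        * ((((N : ℤ) + n - t).toNat.factorial : ℚ))
      = ((∏ k ∈ Finset.range i, ((t : ℚ) - (k + 1)))
          * ∏ k ∈ Finset.Ico (i + 1) n, ((N : ℚ) + k + 1 - t)) * (N.factorial : ℚ) := by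
  rcases le_or_gt t i with hti | hti
  · -- t ≤ i : both sides zero
    have hz : zchoose N (t - (i + 1)) = 0 := by
      rw [zchoose, if_neg (by omega)]
    have hmem : (t - 1).toNat ∈ Finset.range i := Finset.mem_range.mpr (by omega)
    have hc : (((t - 1).toNat : ℕ) : ℚ) = (t : ℚ) - 1 := by
      have := Int.toNat_of_nonneg (show (0:ℤ) ≤ t - 1 by omega)
      exact_mod_cast congrArg (fun z : ℤ => (z : ℚ)) this
    have hzero : (t : ℚ) - (((t - 1).toNat : ℕ) + 1) = 0 := by rw [hc]; ring
    rw [hz, Finset.prod_eq_zero hmem hzero]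
    simp
  rcases le_or_gt t ((N : ℤ) + i + 1) with htN | htN
  · -- main case
    have h0 : (0 : ℤ) ≤ t - (i + 1) := by omega
    set m := (t - (i + 1)).toNat with hm
    have hmN : m ≤ N := by omega
    set s := (t - 1).toNat with hs
    set u := ((N : ℤ) + n - t).toNat with hu
    have hsi : i ≤ s := by omega
    have hui : n - 1 - i ≤ u := by omega
    have e1 : m.factorial * s.descFactorial i = s.factorial := by
      have := Nat.factorial_mul_descFactorial hsi
      rwa [show s - i = m by omega] at this
    have e2 : (N - m).factorial * u.descFactorial (n - 1 - i) = u.factorial := by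
      have := Nat.factorial_mul_descFactorial hui
      rwa [show u - (n - 1 - i) = N - m by omega] at this
    have key : N.choose m * s.factorial * u.factorial
        = s.descFactorial i * u.descFactorial (n - 1 - i) * N.factorial := by
      rw [← e1, ← e2, ← Nat.choose_mul_factorial_mul_factorial hmN]
      ring
    have hz : zchoose N (t - (i + 1)) = N.choose m := by rw [zchoose, if_pos h0]
    rw [hz, lgv_prod1 i t (by omega), lgv_prod2 N n i t hi htN]
    exact_mod_cast key
  · -- t > N + i + 1 : both sides zero
    have hz : zchoose N (t - (i + 1)) = 0 := by
      rw [zchoose, if_pos (by omega)]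
      exact Nat.choose_eq_zero_of_lt (by omega)
    have hmem : (t - N - 1).toNat ∈ Finset.Ico (i + 1) n := by
      rw [Finset.mem_Ico]; omega
    have hc : (((t - N - 1).toNat : ℕ) : ℚ) = (t : ℚ) - N - 1 := by
      have := Int.toNat_of_nonneg (show (0:ℤ) ≤ t - N - 1 by omega)
      exact_mod_cast congrArg (fun z : ℤ => (z : ℚ)) this
    have hzero : (N : ℚ) + (((t - N - 1).toNat : ℕ)) + 1 - t = 0 := by rw [hc]; ring
    rw [hz, Finset.prod_eq_zero hmem hzero]
    simp

open Polynomial in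
lemma lgv_det_swap (n N : ℕ) (z w : Fin n → ℚ) :
    (Matrix.of fun i j : Fin n => (∏ k ∈ Finset.range i.1, (z j - (k + 1)))
        * ∏ k ∈ Finset.Ico (i.1 + 1) n, ((N : ℚ) + k + 1 - z j)).det
      * (∏ i : Fin n, ∏ j ∈ Finset.Ioi i, (w j - w i))
    = (Matrix.of fun i j : Fin n => (∏ k ∈ Finset.range i.1, (w j - (k + 1)))
        * ∏ k ∈ Finset.Ico (i.1 + 1) n, ((N : ℚ) + k + 1 - w j)).det
      * (∏ i : Fin n, ∏ j ∈ Finset.Ioi i, (z j - z i)) := by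
  set p : Fin n → ℚ[X] := fun i =>
    (∏ k ∈ Finset.range i.1, (X - C ((k : ℚ) + 1)))
      * ∏ k ∈ Finset.Ico (i.1 + 1) n, (C ((N : ℚ) + k + 1) - X) with hp
  have hdeg : ∀ i : Fin n, (p i).natDegree < n := by
    intro i
    have d1 : (∏ k ∈ Finset.range i.1, (X - C ((k : ℚ) + 1))).natDegree ≤ i.1 := by
      refine le_trans (Polynomial.natDegree_prod_le _ _) ?_
      refine le_trans (Finset.sum_le_card_nsmul _ _ 1 ?_) (by simp)
      intro k _
      refine le_trans (Polynomial.natDegree_sub_le _ _) ?_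
      have hconst : ((k : ℚ[X]) + 1).natDegree = 0 := by
        have h : ((k : ℚ[X]) + 1) = ((k + 1 : ℕ) : ℚ[X]) := by push_cast; ring
        rw [h, Polynomial.natDegree_natCast]
      simp [hconst]
    have d2 : (∏ k ∈ Finset.Ico (i.1 + 1) n, (C ((N : ℚ) + k + 1) - X)).natDegree
        ≤ n - (i.1 + 1) := by
      refine le_trans (Polynomial.natDegree_prod_le _ _) ?_
      refine le_trans (Finset.sum_le_card_nsmul _ _ 1 ?_) (by simp [Nat.card_Ico])
      intro k _
      refine le_trans (Polynomial.natDegree_sub_le _ _) ?_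
      have hconst : ((N : ℚ[X]) + k + 1).natDegree = 0 := by
        have h : ((N : ℚ[X]) + k + 1) = ((N + k + 1 : ℕ) : ℚ[X]) := by push_cast; ring
        rw [h, Polynomial.natDegree_natCast]
      simp [hconst]
    have hpi : (p i).natDegree ≤ i.1 + (n - (i.1 + 1)) := by
      simp only [hp]
      exact le_trans (Polynomial.natDegree_mul_le) (add_le_add d1 d2)
    have hi : i.1 < n := i.2
    omega
  have heval : ∀ (i : Fin n) (x : ℚ), (p i).eval x
      = (∏ k ∈ Finset.range i.1, (x - (k + 1)))
        * ∏ k ∈ Finset.Ico (i.1 + 1) n, ((N : ℚ) + k + 1 - x) := by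
    intro i x
    simp [hp, Polynomial.eval_prod]
  have hfac : ∀ v : Fin n → ℚ,
      (Matrix.of fun i j : Fin n => (∏ k ∈ Finset.range i.1, (v j - (k + 1)))
        * ∏ k ∈ Finset.Ico (i.1 + 1) n, ((N : ℚ) + k + 1 - v j)).det
      = (Matrix.of fun i k : Fin n => (p i).coeff k.1).det
        * ∏ i : Fin n, ∏ j ∈ Finset.Ioi i, (v j - v i) := by
    intro v
    have hmat : (Matrix.of fun i j : Fin n => (∏ k ∈ Finset.range i.1, (v j - (k + 1)))
        * ∏ k ∈ Finset.Ico (i.1 + 1) n, ((N : ℚ) + k + 1 - v j))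
        = (Matrix.of fun i k : Fin n => (p i).coeff k.1) * Matrix.transpose (Matrix.vandermonde v) := by
      ext i j
      rw [Matrix.mul_apply]
      simp only [Matrix.of_apply, Matrix.transpose_apply, Matrix.vandermonde_apply]
      rw [← heval i (v j), Polynomial.eval_eq_sum_range' (hdeg i) (v j),
        ← Fin.sum_univ_eq_sum_range]
    rw [hmat, Matrix.det_mul, Matrix.det_transpose, Matrix.det_vandermonde]
  rw [hfac z, hfac w]
  ring

/-- Determinant of the Lindström–Gessel–Viennot matrix `[C(N, y_j - i)]`:
`det M = (Π_{i<j}(y_j-y_i) Π (N+i-1)!) / (Π (y_i-1)! Π (N+n-y_i)!)`. -/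
theorem lgv_binomial_det (n N : ℕ) (hn : 1 ≤ n) (hN : 1 ≤ N) (y : Fin n → ℤ)
    (hmono : StrictMono y) (hy₁ : ∀ i, 1 ≤ y i) (hy₂ : ∀ i, y i ≤ N + (i.1 + 1)) :
    Matrix.det (Matrix.of fun i j : Fin n => (zchoose N (y j - (i.1 + 1)) : ℚ)) =
      ((∏ i : Fin n, ∏ j ∈ Finset.Ioi i, ((y j - y i : ℤ) : ℚ)) *
        ∏ i : Fin n, (Nat.factorial (N + i.1) : ℚ)) /
      ((∏ i : Fin n, (Nat.factorial (y i - 1).toNat : ℚ)) *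
        ∏ i : Fin n, (Nat.factorial ((N : ℤ) + n - y i).toNat : ℚ)) := by
  obtain ⟨m, rfl⟩ : ∃ m, n = m + 1 := ⟨n - 1, by omega⟩
  have hyub : ∀ j : Fin (m + 1), y j ≤ (N : ℤ) + (m + 1) := by
    intro j
    refine le_trans (hy₂ j) ?_
    have : j.1 ≤ m := by omega
    push_cast
    omega
  -- notation
  set z : Fin (m + 1) → ℚ := fun j => ((y j : ℤ) : ℚ) with hz
  set w : Fin (m + 1) → ℚ := fun j => (j.1 : ℚ) + 1 with hw
  set G : (Fin (m + 1) → ℚ) → Matrix (Fin (m + 1)) (Fin (m + 1)) ℚ := fun v =>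
    Matrix.of fun i j : Fin (m + 1) => (∏ k ∈ Finset.range i.1, (v j - (k + 1)))
      * ∏ k ∈ Finset.Ico (i.1 + 1) (m + 1), ((N : ℚ) + k + 1 - v j) with hG
  set f1 : Fin (m + 1) → ℚ := fun j => ((y j - 1).toNat.factorial : ℚ) with hf1
  set f2 : Fin (m + 1) → ℚ := fun j =>
    ((((N : ℤ) + ((m + 1 : ℕ) : ℤ) - y j).toNat.factorial : ℕ) : ℚ) with hf2
  have hf1ne : ∀ j, f1 j ≠ 0 := fun j => Nat.cast_ne_zero.mpr (Nat.factorial_ne_zero _)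
  have hf2ne : ∀ j, f2 j ≠ 0 := fun j => Nat.cast_ne_zero.mpr (Nat.factorial_ne_zero _)
  have hNne : ((N.factorial : ℕ) : ℚ) ≠ 0 := Nat.cast_ne_zero.mpr (Nat.factorial_ne_zero _)
  set d : Fin (m + 1) → ℚ := fun j => (N.factorial : ℚ) / (f1 j * f2 j) with hd
  -- step 1 : matrix factorization
  have hM : (Matrix.of fun i j : Fin (m + 1) => (zchoose N (y j - (i.1 + 1)) : ℚ))
      = G z * Matrix.diagonal d := by
    ext i j
    rw [Matrix.mul_diagonal]
    have ent := lgv_entry (m + 1) N i.1 i.2 (y j) (hy₁ j) (by exact_mod_cast hyub j)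
    have harg : y j - (i.1 + 1) = y j - ((i.1 : ℤ) + 1) := by push_cast; ring
    simp only [Matrix.of_apply, hG, hd, hf1, hf2, hz]
    rw [harg, ← mul_div_assoc, eq_div_iff (mul_ne_zero (hf1ne j) (hf2ne j))]
    simp only [hf1, hf2]
    linear_combination ent
  -- step 2 : triangular evaluation
  set Δ : Fin (m + 1) → ℕ := fun i =>
    i.1.factorial * ((N + m - i.1).descFactorial (m - i.1)) with hΔ
  have htri : (G w).det = ∏ i : Fin (m + 1), (Δ i : ℚ) := by
    have hut : (G w).BlockTriangular id := by
      intro i j hji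
      have hmem : j.1 ∈ Finset.range i.1 := Finset.mem_range.mpr hji
      have hzero : w j - ((j.1 : ℚ) + 1) = 0 := by simp [hw]
      simp only [hG, Matrix.of_apply]
      rw [Finset.prod_eq_zero hmem hzero, zero_mul]
    rw [Matrix.det_of_upperTriangular hut]
    apply Finset.prod_congr rfl
    intro i _
    have hp1 := lgv_prod1 i.1 ((i.1 : ℤ) + 1) (by omega)
    have hp2 := lgv_prod2 N (m + 1) i.1 ((i.1 : ℤ) + 1) i.2 (by omega)
    have e1 : (((i.1 : ℤ) + 1) - 1).toNat = i.1 := by omega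
    have e2 : ((N : ℤ) + ((m + 1 : ℕ) : ℤ) - ((i.1 : ℤ) + 1)).toNat = N + m - i.1 := by omega
    have e3 : m + 1 - 1 - i.1 = m - i.1 := by omega
    rw [e1, Nat.descFactorial_self] at hp1
    rw [e2, e3] at hp2
    simp only [hG, Matrix.of_apply, hΔ, hw]
    rw [show ((i.1 : ℚ) + 1) = ((((i.1 : ℤ) + 1) : ℤ) : ℚ) by push_cast; ring]
    rw [hp1, hp2]
    exact (Nat.cast_mul _ _).symm
  -- step 3 : vandermonde at consecutive integers
  have hVw : (∏ i : Fin (m + 1), ∏ j ∈ Finset.Ioi i, (w j - w i))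
      = (Nat.superFactorial m : ℚ) := by
    rw [← Matrix.det_vandermonde_id_eq_superFactorial, Matrix.det_vandermonde]
    apply Finset.prod_congr rfl; intro i _
    apply Finset.prod_congr rfl; intro j _
    simp [hw]
  -- superfactorial identities
  have hsf : ∏ i : Fin (m + 1), (i.1.factorial : ℕ) = Nat.superFactorial m := by
    rw [Fin.prod_univ_eq_prod_range]
    exact Nat.prod_range_succ_factorial m
  have hrefl : ∏ i : Fin (m + 1), (N + m - i.1).factorial
      = ∏ i : Fin (m + 1), (N + i.1).factorial := by
    rw [Fin.prod_univ_eq_prod_range (fun i => (N + m - i).factorial),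
      Fin.prod_univ_eq_prod_range (fun i => (N + i).factorial),
      ← Finset.prod_range_reflect]
    apply Finset.prod_congr rfl
    intro i hi
    rw [Finset.mem_range] at hi
    congr 1
    omega
  have hkey : N.factorial ^ (m + 1) * ∏ i : Fin (m + 1), Δ i
      = Nat.superFactorial m * ∏ i : Fin (m + 1), (N + i.1).factorial := by
    have hconst : (N.factorial : ℕ) ^ (m + 1) = ∏ _i : Fin (m + 1), N.factorial := by
      simp [Finset.prod_const]
    rw [← hsf, ← hrefl, hconst, ← Finset.prod_mul_distrib, ← Finset.prod_mul_distrib]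
    apply Finset.prod_congr rfl
    intro i _
    have hle : m - i.1 ≤ N + m - i.1 := by omega
    have := Nat.factorial_mul_descFactorial hle
    rw [show N + m - i.1 - (m - i.1) = N by omega] at this
    simp only [hΔ]
    calc N.factorial * (i.1.factorial * (N + m - i.1).descFactorial (m - i.1))
        = i.1.factorial * (N.factorial * (N + m - i.1).descFactorial (m - i.1)) := by ring
      _ = i.1.factorial * (N + m - i.1).factorial := by rw [this]
  -- assemble
  have hswap := lgv_det_swap (m + 1) N z w
  have hsfpos : 0 < Nat.superFactorial m := by
    rw [← Nat.prod_range_succ_factorial]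
    exact Finset.prod_pos fun i _ => Nat.factorial_pos i
  have hsfne : ((Nat.superFactorial m : ℕ) : ℚ) ≠ 0 := Nat.cast_ne_zero.mpr hsfpos.ne'
  have hdetGz : (G z).det * (Nat.superFactorial m : ℚ)
      = (∏ i : Fin (m + 1), (Δ i : ℚ)) * ∏ i : Fin (m + 1), ∏ j ∈ Finset.Ioi i, (z j - z i) := by
    rw [← htri, ← hVw]
    simp only [hG]
    exact lgv_det_swap (m + 1) N z w
  have hkeyq : (N.factorial : ℚ) ^ (m + 1) * ∏ i : Fin (m + 1), (Δ i : ℚ)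
      = (Nat.superFactorial m : ℚ) * ∏ i : Fin (m + 1), ((N + i.1).factorial : ℚ) := by
    exact_mod_cast congrArg (Nat.cast (R := ℚ)) hkey
  have hVz : ∏ i : Fin (m + 1), ∏ j ∈ Finset.Ioi i, (z j - z i)
      = ∏ i : Fin (m + 1), ∏ j ∈ Finset.Ioi i, ((y j - y i : ℤ) : ℚ) := by
    apply Finset.prod_congr rfl; intro i _
    apply Finset.prod_congr rfl; intro j _
    simp only [hz]
    push_cast
    ring
  have hprodd : ∏ j : Fin (m + 1), d j
      = (N.factorial : ℚ) ^ (m + 1) / ((∏ j : Fin (m + 1), f1 j) * ∏ j : Fin (m + 1), f2 j) := by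
    simp only [hd]
    rw [Finset.prod_div_distrib, Finset.prod_const, Finset.card_univ, Fintype.card_fin,
      Finset.prod_mul_distrib]
  have h1 : (∏ j : Fin (m + 1), f1 j) ≠ 0 := Finset.prod_ne_zero_iff.mpr fun j _ => hf1ne j
  have h2 : (∏ j : Fin (m + 1), f2 j) ≠ 0 := Finset.prod_ne_zero_iff.mpr fun j _ => hf2ne j
  have hA : (G z).det = ((∏ i : Fin (m + 1), (Δ i : ℚ))
      * ∏ i : Fin (m + 1), ∏ j ∈ Finset.Ioi i, ((y j - y i : ℤ) : ℚ))
      / (Nat.superFactorial m : ℚ) := by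
    rw [eq_div_iff hsfne, ← hVz]
    exact hdetGz
  rw [hM, Matrix.det_mul, Matrix.det_diagonal, hprodd, hA, div_mul_div_comm,
    div_eq_div_iff (mul_ne_zero hsfne (mul_ne_zero h1 h2)) (mul_ne_zero h1 h2)]
  linear_combination ((∏ i : Fin (m + 1), ∏ j ∈ Finset.Ioi i, ((y j - y i : ℤ) : ℚ)) *
    (∏ j : Fin (m + 1), f1 j) * (∏ j : Fin (m + 1), f2 j)) * hkeyq
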